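/- Let L ∈ ℝ^{V×V} be a graph Laplacian matrix on a finite set V of size n with a factorization L = C Cᵀ, where C ∈ ℝ^{V×[n]}. Let S ⊆ V with |S| = j, set T = V \ S and J = [j], and suppose C_{vl} = 0 for all v ∈ S and l > j, and that C_{SJ} is invertible. Then for every v ∈ T, writing T' = T \ {v}, the (v,v) diagonal entry of the Schur complement satisfies (L_{TT} − L_{TS} L_{SS}^{-1} L_{ST})_{vv} = ⟨Σ_{u∈T'} C_{uJ}, C_{vJ}⟩ − Σ_{u∈T'} L_{uv}. -/

import Mathlib

open Matrix BigOperators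

/-- The Schur complement of `S` in `A`, as a matrix indexed by the complement of `S`. -/
noncomputable def schurCompl {V : Type*} [Fintype V] [DecidableEq V]
    (A : Matrix V V ℝ) (S : Finset V) : Matrix ↥Sᶜ ↥Sᶜ ℝ :=
  A.submatrix (fun a : ↥Sᶜ => (a : V)) (fun a : ↥Sᶜ => (a : V))
    - A.submatrix (fun a : ↥Sᶜ => (a : V)) (fun a : ↥S => (a : V))
      * (A.submatrix (fun a : ↥S => (a : V)) (fun a : ↥S => (a : V)))⁻¹
      * A.submatrix (fun a : ↥S => (a : V)) (fun a : ↥Sᶜ => (a : V))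

/-- For a graph Laplacian `L = C Cᵀ` whose rows indexed by `S` are supported on the first
`j` columns and with `C_{SJ}` invertible, the diagonal entry of the Schur complement at
`v ∉ S` equals `⟨∑_{u ∈ T'} C_{uJ}, C_{vJ}⟩ − ∑_{u ∈ T'} L_{uv}` where `T' = (V \ S) \ {v}`. -/
theorem schur_complement_diag_stable_formula
    {V : Type*} [Fintype V] [DecidableEq V]
    (n : ℕ) (hn : Fintype.card V = n)
    (L : Matrix V V ℝ)
    (hsym : L.IsSymm)
    (hoff : ∀ u v : V, u ≠ v → L u v ≤ 0)
    (hdiag : ∀ v : V, L v v = -∑ u ∈ Finset.univ.erase v, L u v)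
    (C : Matrix V (Fin n) ℝ)
    (hLC : L = C * Cᵀ)
    (S : Finset V) (j : ℕ) (hS : S.card = j)
    (hsupp : ∀ v ∈ S, ∀ l : Fin n, j ≤ (l : ℕ) → C v l = 0)
    (hinv : ∃ B : Matrix {l : Fin n // (l : ℕ) < j} ↥S ℝ,
      C.submatrix (fun a : ↥S => (a : V)) (fun l : {l : Fin n // (l : ℕ) < j} => (l : Fin n)) * B = 1
      ∧ B * C.submatrix (fun a : ↥S => (a : V)) (fun l : {l : Fin n // (l : ℕ) < j} => (l : Fin n)) = 1) :
    ∀ (v : V) (hv : v ∉ S),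
      schurCompl L S ⟨v, Finset.mem_compl.mpr hv⟩ ⟨v, Finset.mem_compl.mpr hv⟩
        = (∑ l : {l : Fin n // (l : ℕ) < j}, (∑ u ∈ Sᶜ.erase v, C u l) * C v l)
          - ∑ u ∈ Sᶜ.erase v, L u v := by
  classical
  intro v hv
  obtain ⟨B, hAB, hBA⟩ := hinv
  set A : Matrix ↥S {l : Fin n // (l : ℕ) < j} ℝ :=
    C.submatrix (fun a : ↥S => (a : V)) (fun l : {l : Fin n // (l : ℕ) < j} => (l : Fin n))
    with hAdef
  -- basic entrywise facts
  have hLentry : ∀ u w : V, L u w = ∑ l : Fin n, C u l * C w l := by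
    intro u w
    simp [hLC, Matrix.mul_apply, Matrix.transpose_apply]
  have hsymm : ∀ u w : V, L u w = L w u := fun u w => hsym.apply w u
  have hcolL : ∀ w : V, ∑ u : V, L u w = 0 := by
    intro w
    rw [← Finset.add_sum_erase Finset.univ (fun u => L u w) (Finset.mem_univ w), hdiag w]
    ring
  have hsplit : ∀ f : Fin n → ℝ,
      (∑ l : Fin n, f l)
        = (∑ l : {l : Fin n // (l : ℕ) < j}, f l) + ∑ l : {l : Fin n // ¬ (l : ℕ) < j}, f l :=
    fun f => (Fintype.sum_subtype_add_sum_subtype _ f).symm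
  -- for rows indexed by S, sums over all columns reduce to columns in J
  have hred : ∀ (u : V), u ∈ S → ∀ g : Fin n → ℝ,
      (∑ l : Fin n, C u l * g l) = ∑ l : {l : Fin n // (l : ℕ) < j}, C u (l : Fin n) * g l := by
    intro u hu g
    rw [hsplit fun l => C u l * g l]
    have hz : (∑ l : {l : Fin n // ¬ (l : ℕ) < j}, C u (l : Fin n) * g l) = 0 :=
      Finset.sum_eq_zero fun l _ => by rw [hsupp u hu l (le_of_not_gt l.2), zero_mul]
    rw [hz, add_zero]
  -- the column sums of C vanish on J
  have hsJ : ∀ l : {l : Fin n // (l : ℕ) < j}, (∑ u : V, C u (l : Fin n)) = 0 := by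
    set y : {l : Fin n // (l : ℕ) < j} → ℝ := fun l => ∑ u : V, C u (l : Fin n) with hy
    have hAy : A *ᵥ y = 0 := by
      funext w
      show ∑ l, A w l * y l = 0
      have h1 : (∑ l : {l : Fin n // (l : ℕ) < j}, A w l * y l)
          = ∑ l : Fin n, C (w : V) l * ∑ u : V, C u l := by
        simp only [hAdef, hy, Matrix.submatrix_apply]
        exact (hred (w : V) w.2 fun l => ∑ u : V, C u l).symm
      rw [h1]
      calc ∑ l : Fin n, C (w : V) l * ∑ u : V, C u l
          = ∑ l : Fin n, ∑ u : V, C (w : V) l * C u l := by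
            simp [Finset.mul_sum]
        _ = ∑ u : V, ∑ l : Fin n, C (w : V) l * C u l := Finset.sum_comm
        _ = ∑ u : V, L u (w : V) := by
            refine Finset.sum_congr rfl fun u _ => ?_
            rw [← hLentry, hsymm]
        _ = 0 := hcolL (w : V)
    have hy0 : y = 0 := by
      calc y = (1 : Matrix _ _ ℝ) *ᵥ y := (Matrix.one_mulVec y).symm
        _ = (B * A) *ᵥ y := by rw [hBA]
        _ = B *ᵥ (A *ᵥ y) := (Matrix.mulVec_mulVec y B A).symm
        _ = 0 := by rw [hAy, Matrix.mulVec_zero]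
    intro l
    exact congrFun hy0 l
  -- the Schur block L_SS equals A * Aᵀ and its inverse is Bᵀ * B
  have hM : L.submatrix (fun a : ↥S => (a : V)) (fun a : ↥S => (a : V)) = A * Aᵀ := by
    ext u w
    rw [Matrix.submatrix_apply, Matrix.mul_apply, hLentry]
    exact hred (u : V) u.2 fun l => C (w : V) l
  have hMinv : (L.submatrix (fun a : ↥S => (a : V)) (fun a : ↥S => (a : V)))⁻¹ = Bᵀ * B := by
    apply Matrix.inv_eq_left_inv
    rw [hM]
    calc Bᵀ * B * (A * Aᵀ) = Bᵀ * (B * A * Aᵀ) := by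
          rw [Matrix.mul_assoc Bᵀ B (A * Aᵀ), Matrix.mul_assoc B A Aᵀ]
      _ = Bᵀ * Aᵀ := by rw [hBA, Matrix.one_mul]
      _ = (A * B)ᵀ := (Matrix.transpose_mul A B).symm
      _ = 1 := by rw [hAB, Matrix.transpose_one]
  -- the vector x = C_{vJ} and the column c = L_{Sv}
  set x : {l : Fin n // (l : ℕ) < j} → ℝ := fun l => C v (l : Fin n) with hx
  set c : ↥S → ℝ := fun u => L (u : V) v with hc
  have hcAx : c = A *ᵥ x := by
    funext u
    show L (u : V) v = ∑ l, A u l * x l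
    rw [hLentry]
    exact hred (u : V) u.2 fun l => C v l
  have hBc : B *ᵥ c = x := by
    rw [hcAx, Matrix.mulVec_mulVec, hBA, Matrix.one_mulVec]
  -- compute the Schur complement diagonal entry
  have hschur : schurCompl L S ⟨v, Finset.mem_compl.mpr hv⟩ ⟨v, Finset.mem_compl.mpr hv⟩
      = L v v - ∑ l : {l : Fin n // (l : ℕ) < j}, C v (l : Fin n) * C v (l : Fin n) := by
    have hprod : (L.submatrix (fun a : ↥Sᶜ => (a : V)) (fun a : ↥S => (a : V))
        * (L.submatrix (fun a : ↥S => (a : V)) (fun a : ↥S => (a : V)))⁻¹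
        * L.submatrix (fun a : ↥S => (a : V)) (fun a : ↥Sᶜ => (a : V)))
          ⟨v, Finset.mem_compl.mpr hv⟩ ⟨v, Finset.mem_compl.mpr hv⟩
        = c ⬝ᵥ ((Bᵀ * B) *ᵥ c) := by
      rw [hMinv, Matrix.mul_assoc, Matrix.mul_apply]
      simp only [Matrix.submatrix_apply, dotProduct, Matrix.mulVec, Matrix.mul_apply,
        dotProduct]
      refine Finset.sum_congr rfl fun u _ => ?_
      rw [hsymm v (u : V)]
    have hdot : c ⬝ᵥ ((Bᵀ * B) *ᵥ c)
        = ∑ l : {l : Fin n // (l : ℕ) < j}, C v (l : Fin n) * C v (l : Fin n) := by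
      calc c ⬝ᵥ ((Bᵀ * B) *ᵥ c) = c ⬝ᵥ (Bᵀ *ᵥ (B *ᵥ c)) := by
            rw [Matrix.mulVec_mulVec]
        _ = c ⬝ᵥ (Bᵀ *ᵥ x) := by rw [hBc]
        _ = (c ᵥ* Bᵀ) ⬝ᵥ x := dotProduct_mulVec c Bᵀ x
        _ = (B *ᵥ c) ⬝ᵥ x := by rw [Matrix.vecMul_transpose]
        _ = x ⬝ᵥ x := by rw [hBc]
        _ = ∑ l : {l : Fin n // (l : ℕ) < j}, C v (l : Fin n) * C v (l : Fin n) := rfl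
    show (L.submatrix _ _ - _) _ _ = _
    rw [Matrix.sub_apply, Matrix.submatrix_apply, hprod, hdot]
  rw [hschur]
  -- final algebra on sums
  set t : Fin n → ℝ := fun l => ∑ u ∈ Sᶜ.erase v, C u l with ht
  have hTL : ∑ u ∈ Sᶜ.erase v, L u v = ∑ l : Fin n, t l * C v l := by
    calc ∑ u ∈ Sᶜ.erase v, L u v = ∑ u ∈ Sᶜ.erase v, ∑ l : Fin n, C u l * C v l :=
          Finset.sum_congr rfl fun u _ => hLentry u v
      _ = ∑ l : Fin n, ∑ u ∈ Sᶜ.erase v, C u l * C v l := Finset.sum_comm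
      _ = ∑ l : Fin n, t l * C v l := by
          refine Finset.sum_congr rfl fun l _ => ?_
          rw [ht, Finset.sum_mul]
  have hLvv : L v v = ∑ l : Fin n, C v l * C v l := hLentry v v
  -- the key vanishing on the complement of J
  have hkey : ∑ l : {l : Fin n // ¬ (l : ℕ) < j},
      (C v (l : Fin n) * C v (l : Fin n) + t (l : Fin n) * C v (l : Fin n)) = 0 := by
    have hterm : ∀ l : {l : Fin n // ¬ (l : ℕ) < j},
        C v (l : Fin n) * C v (l : Fin n) + t (l : Fin n) * C v (l : Fin n)
          = (∑ u : V, C u (l : Fin n)) * C v (l : Fin n) := by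
      intro l
      have h1 : C v (l : Fin n) + t (l : Fin n) = ∑ u ∈ Sᶜ, C u (l : Fin n) :=
        Finset.add_sum_erase Sᶜ (fun u => C u (l : Fin n)) (Finset.mem_compl.mpr hv)
      have h2 : ∑ u ∈ S, C u (l : Fin n) = 0 :=
        Finset.sum_eq_zero fun u hu => hsupp u hu l (le_of_not_gt l.2)
      have h3 : (∑ u ∈ Sᶜ, C u (l : Fin n)) + ∑ u ∈ S, C u (l : Fin n)
          = ∑ u : V, C u (l : Fin n) := Finset.sum_compl_add_sum S _
      have h4 : C v (l : Fin n) + t (l : Fin n) = ∑ u : V, C u (l : Fin n) := by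
        rw [h1, ← h3, h2, add_zero]
      calc C v (l : Fin n) * C v (l : Fin n) + t (l : Fin n) * C v (l : Fin n)
          = (C v (l : Fin n) + t (l : Fin n)) * C v (l : Fin n) := by ring
        _ = (∑ u : V, C u (l : Fin n)) * C v (l : Fin n) := by rw [h4]
    rw [Finset.sum_congr rfl fun l _ => hterm l]
    have hall : ∑ l : Fin n, (∑ u : V, C u l) * C v l = 0 := by
      calc ∑ l : Fin n, (∑ u : V, C u l) * C v l
          = ∑ l : Fin n, ∑ u : V, C u l * C v l := by
            refine Finset.sum_congr rfl fun l _ => ?_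
            rw [Finset.sum_mul]
        _ = ∑ u : V, ∑ l : Fin n, C u l * C v l := Finset.sum_comm
        _ = ∑ u : V, L u v := Finset.sum_congr rfl fun u _ => (hLentry u v).symm
        _ = 0 := hcolL v
    have hJz : ∑ l : {l : Fin n // (l : ℕ) < j}, (∑ u : V, C u (l : Fin n)) * C v (l : Fin n)
        = 0 := Finset.sum_eq_zero fun l _ => by rw [hsJ l, zero_mul]
    have := hsplit fun l => (∑ u : V, C u l) * C v l
    rw [hall, hJz] at this
    linarith
  rw [hTL, hLvv, hsplit fun l => C v l * C v l, hsplit fun l => t l * C v l]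
  rw [Finset.sum_add_distrib] at hkey
  have : ∀ l : {l : Fin n // (l : ℕ) < j}, t (l : Fin n) * C v (l : Fin n)
      = (∑ u ∈ Sᶜ.erase v, C u (l : Fin n)) * C v (l : Fin n) := fun l => by rw [ht]
  rw [Finset.sum_congr rfl fun l _ => this l] at *
  linarith
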